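/- Let E be a Banach space isomorphic to E ⊕ E, and let V be a closed subspace of E of finite codimension. Then there exists a decomposition E = E₁ ⊕ E₂ ⊕ E₃ into closed subspaces, each isomorphic to E, such that E₁ ⊕ E₂ ⊂ V. -/

import Mathlib

open ContinuousLinearMap

/-- If `p ⊔ r = ⊤` in a vector space, there is `s ≤ p` with `IsCompl s r`. -/
private theorem exists_isCompl_le' {K W : Type*} [DivisionRing K] [AddCommGroup W] [Module K W]
    {p r : Submodule K W} (h : p ⊔ r = ⊤) : ∃ s : Submodule K W, s ≤ p ∧ IsCompl s r := by
  obtain ⟨c, hc⟩ := Submodule.exists_isCompl (Submodule.comap p.subtype r)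
  refine ⟨c.map p.subtype, Submodule.map_subtype_le p c, ?_, ?_⟩
  · rw [Submodule.disjoint_def]
    rintro x hxc hxr
    obtain ⟨y, hyc, rfl⟩ := Submodule.mem_map.mp hxc
    have hyr : y ∈ Submodule.comap p.subtype r := hxr
    have h0 : y = 0 := by
      have := hc.symm.disjoint.le_bot (Submodule.mem_inf.mpr ⟨hyc, hyr⟩)
      simpa using this
    simp [h0]
  · rw [codisjoint_iff, eq_top_iff]
    intro v _
    have hv : v ∈ p ⊔ r := h ▸ Submodule.mem_top
    obtain ⟨a, ha, b, hb, rfl⟩ := Submodule.mem_sup.mp hv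
    have hmem : (⟨a, ha⟩ : p) ∈ c ⊔ Submodule.comap p.subtype r := by
      rw [hc.symm.sup_eq_top]; trivial
    obtain ⟨y, hy, z, hz, hyz⟩ := Submodule.mem_sup.mp hmem
    have hay : a = (y : W) + (z : W) := by
      have := congrArg (Subtype.val) hyz; simpa using this.symm
    rw [hay, add_assoc]
    exact Submodule.add_mem_sup (Submodule.mem_map_of_mem hy) (r.add_mem hz hb)

/-- An isomorphic copy of a "coordinate" submodule is isomorphic to the model space. -/
private theorem nonempty_equiv_map_aux {M E : Type*} [NormedAddCommGroup M] [NormedSpace ℝ M]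
    [NormedAddCommGroup E] [NormedSpace ℝ E]
    (χ : M ≃L[ℝ] E) (ι : E →L[ℝ] M) (π : M →L[ℝ] E) (S : Submodule ℝ M)
    (h₁ : ∀ x, π (ι x) = x) (h₂ : ∀ m ∈ S, ι (π m) = m) (h₃ : ∀ x, ι x ∈ S) :
    Nonempty (↥(Submodule.map (χ.toLinearEquiv : M →ₗ[ℝ] E) S) ≃L[ℝ] E) := by
  set T := Submodule.map (χ.toLinearEquiv : M →ₗ[ℝ] E) S with hT
  have hmem : ∀ x : E, (χ : M →L[ℝ] E) (ι x) ∈ T := fun x => ⟨ι x, h₃ x, rfl⟩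
  refine ⟨(ContinuousLinearEquiv.equivOfInverse
    (((χ : M →L[ℝ] E).comp ι).codRestrict T (fun x => hmem x))
    (π.comp ((χ.symm : E →L[ℝ] M).comp (Submodule.subtypeL T)))
    ?_ ?_).symm⟩
  · intro x
    show π (χ.symm (χ (ι x))) = x
    rw [ContinuousLinearEquiv.symm_apply_apply, h₁]
  · rintro ⟨y, hy⟩
    obtain ⟨mm, hmm, hmy⟩ := hy
    apply Subtype.ext
    show χ (ι (π (χ.symm y))) = y
    have hsy : χ.symm y = mm := by
      have hmy' : χ mm = y := hmy
      rw [← hmy', ContinuousLinearEquiv.symm_apply_apply]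
    rw [hsy, h₂ mm hmm]
    exact hmy


private def shearUp {E : Type*} [NormedAddCommGroup E] [NormedSpace ℝ E]
    (G : (E × E) →L[ℝ] E) : ((E × E) × E) ≃L[ℝ] ((E × E) × E) :=
  ContinuousLinearEquiv.equivOfInverse
    ((fst ℝ (E × E) E).prod ((snd ℝ (E × E) E) + G.comp (fst ℝ (E × E) E)))
    ((fst ℝ (E × E) E).prod ((snd ℝ (E × E) E) - G.comp (fst ℝ (E × E) E)))
    (fun x => by ext <;> simp) (fun x => by ext <;> simp)

private lemma shearUp_apply {E : Type*} [NormedAddCommGroup E] [NormedSpace ℝ E]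
    (G : (E × E) →L[ℝ] E) (x : (E × E) × E) : shearUp G x = (x.1, x.2 + G x.1) := rfl

private def shearDown {E : Type*} [NormedAddCommGroup E] [NormedSpace ℝ E]
    (F : E →L[ℝ] E × E) : ((E × E) × E) ≃L[ℝ] ((E × E) × E) :=
  ContinuousLinearEquiv.equivOfInverse
    (((fst ℝ (E × E) E) + F.comp (snd ℝ (E × E) E)).prod (snd ℝ (E × E) E))
    (((fst ℝ (E × E) E) - F.comp (snd ℝ (E × E) E)).prod (snd ℝ (E × E) E))
    (fun x => by ext <;> simp) (fun x => by ext <;> simp)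

private lemma shearDown_apply {E : Type*} [NormedAddCommGroup E] [NormedSpace ℝ E]
    (F : E →L[ℝ] E × E) (x : (E × E) × E) : shearDown F x = (x.1 + F x.2, x.2) := rfl

/-- Bookkeeping: given an isomorphism `χ : (E × E) × E ≃ E` carrying the first two coordinate
subspaces into `V`, produce the desired decomposition. -/
private theorem build_decomposition {E : Type*} [NormedAddCommGroup E] [NormedSpace ℝ E]
    (V : Submodule ℝ E) (χ : ((E × E) × E) ≃L[ℝ] E)
    (hkey : ∀ p : E × E, χ (p, 0) ∈ V) :
    ∃ E₁ E₂ E₃ : Submodule ℝ E,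
      IsClosed (E₁ : Set E) ∧ IsClosed (E₂ : Set E) ∧ IsClosed (E₃ : Set E) ∧
      DirectSum.IsInternal (fun i : Fin 3 => ![E₁, E₂, E₃] i) ∧
      Nonempty (E₁ ≃L[ℝ] E) ∧ Nonempty (E₂ ≃L[ℝ] E) ∧ Nonempty (E₃ ≃L[ℝ] E) ∧
      E₁ ⊔ E₂ ≤ V := by
  classical
  set f : ((E × E) × E) →ₗ[ℝ] E := (χ.toLinearEquiv : ((E × E) × E) →ₗ[ℝ] E) with hf
  set S₁ : Submodule ℝ ((E × E) × E) :=
    ((⊤ : Submodule ℝ E).prod (⊥ : Submodule ℝ E)).prod (⊥ : Submodule ℝ E) with hS₁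
  set S₂ : Submodule ℝ ((E × E) × E) :=
    ((⊥ : Submodule ℝ E).prod (⊤ : Submodule ℝ E)).prod (⊥ : Submodule ℝ E) with hS₂
  set S₃ : Submodule ℝ ((E × E) × E) :=
    ((⊥ : Submodule ℝ E).prod (⊥ : Submodule ℝ E)).prod (⊤ : Submodule ℝ E) with hS₃
  have hfapp : ∀ x, f x = χ x := fun x => rfl
  have hclosed : ∀ S : Submodule ℝ ((E × E) × E), IsClosed (S : Set ((E × E) × E)) →
      IsClosed ((S.map f : Submodule ℝ E) : Set E) := by
    intro S hS
    have himg : ((S.map f : Submodule ℝ E) : Set E) =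
        χ.toHomeomorph '' (S : Set ((E × E) × E)) := by
      ext x
      simp only [Submodule.map_coe, Set.mem_image, ContinuousLinearEquiv.coe_toHomeomorph]
      constructor
      · rintro ⟨mm, hm, rfl⟩; exact ⟨mm, hm, (hfapp mm).symm⟩
      · rintro ⟨mm, hm, rfl⟩; exact ⟨mm, hm, hfapp mm⟩
    rw [himg, Homeomorph.isClosed_image]
    exact hS
  have hScl : ∀ (p q r : Submodule ℝ E), IsClosed (p : Set E) → IsClosed (q : Set E) →
      IsClosed (r : Set E) → IsClosed (((p.prod q).prod r : Submodule ℝ ((E × E) × E)) :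
        Set ((E × E) × E)) := by
    intro p q r hp hq hr
    have hset : (((p.prod q).prod r : Submodule ℝ ((E × E) × E)) : Set ((E × E) × E)) =
        ((p : Set E) ×ˢ (q : Set E)) ×ˢ (r : Set E) := by
      ext x; simp [Submodule.mem_prod, Set.mem_prod]
    rw [hset]
    exact (hp.prod hq).prod hr
  have hclTop : IsClosed ((⊤ : Submodule ℝ E) : Set E) := by
    simp only [Submodule.top_coe]; exact isClosed_univ
  have hclBot : IsClosed ((⊥ : Submodule ℝ E) : Set E) := by
    simp only [Submodule.bot_coe]; exact isClosed_singleton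
  -- disjointness facts
  have hd0 : Disjoint S₁ (S₂ ⊔ S₃) := by
    rw [hS₁, hS₂, hS₃, Submodule.prod_sup_prod, Submodule.prod_sup_prod, Submodule.disjoint_def]
    rintro ⟨⟨x1, x2⟩, x3⟩ hx1 hx23
    simp only [Submodule.mem_prod, Submodule.mem_top, Submodule.mem_bot, true_and, and_true,
      sup_bot_eq, bot_sup_eq, sup_top_eq, top_sup_eq, sup_idem] at hx1 hx23
    simp only [Prod.mk_eq_zero]
    tauto
  have hd1 : Disjoint S₂ (S₁ ⊔ S₃) := by
    rw [hS₁, hS₂, hS₃, Submodule.prod_sup_prod, Submodule.prod_sup_prod, Submodule.disjoint_def]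
    rintro ⟨⟨x1, x2⟩, x3⟩ hx1 hx23
    simp only [Submodule.mem_prod, Submodule.mem_top, Submodule.mem_bot, true_and, and_true,
      sup_bot_eq, bot_sup_eq, sup_top_eq, top_sup_eq, sup_idem] at hx1 hx23
    simp only [Prod.mk_eq_zero]
    tauto
  have hd2 : Disjoint S₃ (S₁ ⊔ S₂) := by
    rw [hS₁, hS₂, hS₃, Submodule.prod_sup_prod, Submodule.prod_sup_prod, Submodule.disjoint_def]
    rintro ⟨⟨x1, x2⟩, x3⟩ hx1 hx23
    simp only [Submodule.mem_prod, Submodule.mem_top, Submodule.mem_bot, true_and, and_true,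
      sup_bot_eq, bot_sup_eq, sup_top_eq, top_sup_eq, sup_idem] at hx1 hx23
    simp only [Prod.mk_eq_zero]
    tauto
  refine ⟨S₁.map f, S₂.map f, S₃.map f,
    hclosed _ (hScl _ _ _ hclTop hclBot hclBot),
    hclosed _ (hScl _ _ _ hclBot hclTop hclBot),
    hclosed _ (hScl _ _ _ hclBot hclBot hclTop), ?_, ?_, ?_, ?_, ?_⟩
  · -- IsInternal
    rw [DirectSum.isInternal_submodule_iff_iSupIndep_and_iSup_eq_top]
    constructor
    · have h1 : iSupIndep (fun i : Fin 3 => ![S₁, S₂, S₃] i) := by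
        rw [iSupIndep_def]
        intro i
        fin_cases i
        · refine Disjoint.mono_right ?_ hd0
          refine iSup_le fun j => iSup_le fun hj => ?_
          fin_cases j
          · exact absurd rfl hj
          · exact le_sup_left
          · exact le_sup_right
        · refine Disjoint.mono_right ?_ hd1
          refine iSup_le fun j => iSup_le fun hj => ?_
          fin_cases j
          · exact le_sup_left
          · exact absurd rfl hj
          · exact le_sup_right
        · refine Disjoint.mono_right ?_ hd2
          refine iSup_le fun j => iSup_le fun hj => ?_
          fin_cases j
          · exact le_sup_left
          · exact le_sup_right
          · exact absurd rfl hj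
      have heq : (fun i : Fin 3 => ![S₁.map f, S₂.map f, S₃.map f] i) =
          (fun i => (Submodule.orderIsoMapComap χ.toLinearEquiv) (![S₁, S₂, S₃] i)) := by
        funext i
        fin_cases i <;> rfl
      rw [heq]
      exact h1.map_orderIso _
    · have hsup3 : (⨆ i, (fun i : Fin 3 => ![S₁, S₂, S₃] i) i) = S₁ ⊔ S₂ ⊔ S₃ := by
        apply le_antisymm
        · refine iSup_le fun j => ?_
          fin_cases j
          · exact le_sup_of_le_left le_sup_left
          · exact le_sup_of_le_left le_sup_right
          · exact le_sup_right
        · refine sup_le (sup_le ?_ ?_) ?_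
          · exact le_iSup (fun i : Fin 3 => ![S₁, S₂, S₃] i) 0
          · exact le_iSup (fun i : Fin 3 => ![S₁, S₂, S₃] i) 1
          · exact le_iSup (fun i : Fin 3 => ![S₁, S₂, S₃] i) 2
      have h2 : (⨆ i, (fun i : Fin 3 => ![S₁, S₂, S₃] i) i) = ⊤ := by
        rw [hsup3, hS₁, hS₂, hS₃, Submodule.prod_sup_prod, Submodule.prod_sup_prod]
        simp
      have heq : (fun i : Fin 3 => ![S₁.map f, S₂.map f, S₃.map f] i) =
          (fun i => Submodule.map f (![S₁, S₂, S₃] i)) := by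
        funext i; fin_cases i <;> rfl
      rw [heq, ← Submodule.map_iSup, h2, Submodule.map_top]
      exact LinearMap.range_eq_top.mpr χ.toLinearEquiv.surjective
  · -- E₁ ≃ E
    exact nonempty_equiv_map_aux χ ((inl ℝ (E × E) E).comp (inl ℝ E E))
      ((fst ℝ E E).comp (fst ℝ (E × E) E)) S₁
      (fun x => rfl)
      (by
        rintro ⟨⟨a, b⟩, c⟩ hm
        rw [hS₁] at hm
        simp only [Submodule.mem_prod, Submodule.mem_top, Submodule.mem_bot, true_and] at hm
        obtain ⟨hb, hc⟩ := hm
        subst hb; subst hc; rfl)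
      (by
        intro x
        rw [hS₁]
        simp [Submodule.mem_prod])
  · -- E₂ ≃ E
    exact nonempty_equiv_map_aux χ ((inl ℝ (E × E) E).comp (inr ℝ E E))
      ((snd ℝ E E).comp (fst ℝ (E × E) E)) S₂
      (fun x => rfl)
      (by
        rintro ⟨⟨a, b⟩, c⟩ hm
        rw [hS₂] at hm
        simp only [Submodule.mem_prod, Submodule.mem_top, Submodule.mem_bot,
          true_and, and_true] at hm
        obtain ⟨ha, hc⟩ := hm
        subst ha; subst hc; rfl)
      (by
        intro x
        rw [hS₂]
        simp [Submodule.mem_prod])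
  · -- E₃ ≃ E
    exact nonempty_equiv_map_aux χ (inr ℝ (E × E) E) (snd ℝ (E × E) E) S₃
      (fun x => rfl)
      (by
        rintro ⟨⟨a, b⟩, c⟩ hm
        rw [hS₃] at hm
        simp only [Submodule.mem_prod, Submodule.mem_top, Submodule.mem_bot, and_true] at hm
        obtain ⟨ha, hb⟩ := hm
        subst ha; subst hb; rfl)
      (by
        intro x
        rw [hS₃]
        simp [Submodule.mem_prod])
  · -- E₁ ⊔ E₂ ≤ V
    refine sup_le ?_ ?_
    · rintro x ⟨mm, hm, rfl⟩
      have hm2 : mm.2 = 0 := by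
        rw [hS₁] at hm
        exact (Submodule.mem_bot ℝ).mp (Submodule.mem_prod.mp hm).2
      have hmm : mm = (mm.1, 0) := Prod.ext rfl hm2
      rw [hfapp, hmm]
      exact hkey mm.1
    · rintro x ⟨mm, hm, rfl⟩
      have hm2 : mm.2 = 0 := by
        rw [hS₂] at hm
        exact (Submodule.mem_bot ℝ).mp (Submodule.mem_prod.mp hm).2
      have hmm : mm = (mm.1, 0) := Prod.ext rfl hm2
      rw [hfapp, hmm]
      exact hkey mm.1

/-- If a Banach space `E` is isomorphic to `E ⊕ E` and `V` is a closed subspace of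
finite codimension, then `E` decomposes as an internal direct sum of three closed
subspaces `E₁ ⊕ E₂ ⊕ E₃`, each isomorphic to `E`, with `E₁ ⊕ E₂ ⊆ V`. -/
theorem decomposition_trick
    {E : Type*} [NormedAddCommGroup E] [NormedSpace ℝ E] [CompleteSpace E]
    (hiso : Nonempty (E ≃L[ℝ] E × E))
    (V : Submodule ℝ E) (hVcl : IsClosed (V : Set E))
    (hcodim : FiniteDimensional ℝ (E ⧸ V)) :
    ∃ E₁ E₂ E₃ : Submodule ℝ E,
      IsClosed (E₁ : Set E) ∧ IsClosed (E₂ : Set E) ∧ IsClosed (E₃ : Set E) ∧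
      DirectSum.IsInternal (fun i : Fin 3 => ![E₁, E₂, E₃] i) ∧
      Nonempty (E₁ ≃L[ℝ] E) ∧ Nonempty (E₂ ≃L[ℝ] E) ∧ Nonempty (E₃ ≃L[ℝ] E) ∧
      E₁ ⊔ E₂ ≤ V := by
  classical
  obtain ⟨e⟩ := hiso
  by_cases hfd : FiniteDimensional ℝ E
  · -- finite-dimensional case: E is trivial
    haveI : Subsingleton E := by
      have h1 : Module.finrank ℝ E = Module.finrank ℝ (E × E) := e.toLinearEquiv.finrank_eq
      rw [Module.finrank_prod] at h1
      have h0 : Module.finrank ℝ E = 0 := by omega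
      exact Module.finrank_zero_iff.mp h0
    haveI : Subsingleton (Submodule ℝ E) := (Submodule.subsingleton_iff ℝ).mpr inferInstance
    have hbotcl : IsClosed ((⊥ : Submodule ℝ E) : Set E) := by
      simp only [Submodule.bot_coe]; exact isClosed_singleton
    have hequiv : Nonempty ((⊥ : Submodule ℝ E) ≃L[ℝ] E) :=
      ⟨ContinuousLinearEquiv.equivOfInverse 0 0
        (fun x => Subsingleton.elim _ _) (fun x => Subsingleton.elim _ _)⟩
    refine ⟨⊥, ⊥, ⊥, hbotcl, hbotcl, hbotcl, ?_, hequiv, hequiv, hequiv, by simp⟩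
    rw [DirectSum.isInternal_submodule_iff_iSupIndep_and_iSup_eq_top]
    constructor
    · rw [iSupIndep_def]
      intro i
      have hib : (![⊥, ⊥, ⊥] : Fin 3 → Submodule ℝ E) i = ⊥ := by fin_cases i <;> rfl
      rw [hib]
      exact disjoint_bot_left
    · exact Subsingleton.elim _ _
  · -- infinite-dimensional case
    haveI := hVcl
    set ψ : ((E × E) × E) ≃L[ℝ] E :=
      (e.symm.prodCongr (ContinuousLinearEquiv.refl ℝ E)).trans e.symm with hψ
    set q : E →L[ℝ] E ⧸ V :=
      LinearMap.mkContinuous V.mkQ 1 (fun x => by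
        simpa using Submodule.Quotient.norm_mk_le V x) with hqdef
    have hq0 : ∀ x : E, q x = 0 ↔ x ∈ V := fun x => Submodule.Quotient.mk_eq_zero V
    have hqsurj : Function.Surjective q := fun w => V.mkQ_surjective w
    set ΦA : (E × E) →L[ℝ] E ⧸ V :=
      q.comp ((ψ : ((E × E) × E) →L[ℝ] E).comp (inl ℝ (E × E) E)) with hΦA
    set ΦB : E →L[ℝ] E ⧸ V :=
      q.comp ((ψ : ((E × E) × E) →L[ℝ] E).comp (inr ℝ (E × E) E)) with hΦB
    have hψadd : ∀ (r : E × E) (t : E), q (ψ (r, t)) = ΦA r + ΦB t := by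
      intro r t
      have hrt : ((r, t) : (E × E) × E) = ((r, 0) : (E × E) × E) + ((0, t) : (E × E) × E) := by
        simp
      rw [hrt, map_add, map_add]
      rfl
    have hsupAB : LinearMap.range (ΦA : (E × E) →ₗ[ℝ] E ⧸ V) ⊔
        LinearMap.range (ΦB : E →ₗ[ℝ] E ⧸ V) = ⊤ := by
      rw [eq_top_iff]
      rintro w -
      obtain ⟨x, rfl⟩ := hqsurj w
      obtain ⟨y, rfl⟩ := ψ.surjective x
      rw [show y = (y.1, y.2) from rfl, hψadd]
      exact Submodule.add_mem_sup (LinearMap.mem_range_self _ y.1) (LinearMap.mem_range_self _ y.2)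
    obtain ⟨Q'', hQ''le, hQ''compl⟩ := exists_isCompl_le' hsupAB
    set m := Module.finrank ℝ ↥Q'' with hmdef
    set ε : Module.Basis (Fin m) ℝ ↥Q'' := Module.finBasis ℝ ↥Q'' with hε
    have ha : ∀ j : Fin m, ∃ p : E × E, ΦA p = ((ε j : ↥Q'') : E ⧸ V) :=
      fun j => hQ''le (ε j).2
    choose a haa using ha
    -- the kernel of ΦB is infinite-dimensional
    have hker_ifd : ¬ FiniteDimensional ℝ ↥(LinearMap.ker (ΦB : E →ₗ[ℝ] E ⧸ V)) := by
      intro h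
      apply hfd
      have e1 : (E ⧸ LinearMap.ker (ΦB : E →ₗ[ℝ] E ⧸ V)) ≃ₗ[ℝ]
          ↥(LinearMap.range (ΦB : E →ₗ[ℝ] E ⧸ V)) := (ΦB : E →ₗ[ℝ] E ⧸ V).quotKerEquivRange
      haveI : FiniteDimensional ℝ ↥(LinearMap.range (ΦB : E →ₗ[ℝ] E ⧸ V)) := inferInstance
      haveI : FiniteDimensional ℝ (E ⧸ LinearMap.ker (ΦB : E →ₗ[ℝ] E ⧸ V)) :=
        e1.symm.finiteDimensional
      have hN : IsNoetherian ℝ E := by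
        rw [isNoetherian_iff_submodule_quotient (LinearMap.ker (ΦB : E →ₗ[ℝ] E ⧸ V))]
        constructor
        · exact IsNoetherian.iff_fg.mpr h
        · exact IsNoetherian.iff_fg.mpr inferInstance
      exact IsNoetherian.iff_fg.mp hN
    haveI : Module.Free ℝ ↥(LinearMap.ker (ΦB : E →ₗ[ℝ] E ⧸ V)) := Module.Free.of_divisionRing ℝ _
    have hrank : (m : Cardinal) ≤ Module.rank ℝ ↥(LinearMap.ker (ΦB : E →ₗ[ℝ] E ⧸ V)) := by
      have hge : (Cardinal.aleph0 : Cardinal) ≤ Module.rank ℝ ↥(LinearMap.ker (ΦB : E →ₗ[ℝ] E ⧸ V)) := by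
        by_contra hlt
        push_neg at hlt
        exact hker_ifd (Module.rank_lt_aleph0_iff.mp hlt)
      exact le_trans (le_of_lt (Cardinal.nat_lt_aleph0 m)) hge
    obtain ⟨b0, hb0⟩ := exists_linearIndependent_of_le_rank hrank
    set b : Fin m → E := fun j => ((b0 j : ↥(LinearMap.ker (ΦB : E →ₗ[ℝ] E ⧸ V))) : E) with hbdef
    have hb : LinearIndependent ℝ b :=
      hb0.map' (LinearMap.ker (ΦB : E →ₗ[ℝ] E ⧸ V)).subtype (Submodule.ker_subtype _)
    have hbker : ∀ j, ΦB (b j) = 0 := fun j => (b0 j).2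
    -- biorthogonal functionals
    set Fsp : Submodule ℝ E := Submodule.span ℝ (Set.range b) with hFsp
    haveI : FiniteDimensional ℝ ↥Fsp := FiniteDimensional.span_of_finite ℝ (Set.finite_range b)
    set bb : Module.Basis (Fin m) ℝ ↥Fsp := Module.Basis.span hb with hbb
    have hfex : ∀ j : Fin m, ∃ g : E →L[ℝ] ℝ,
        (∀ x : ↥Fsp, g x = (LinearMap.toContinuousLinearMap (bb.coord j)) x) ∧
        ‖g‖ = ‖LinearMap.toContinuousLinearMap (bb.coord j)‖ :=
      fun j => exists_extension_norm_eq Fsp (LinearMap.toContinuousLinearMap (bb.coord j))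
    choose fhat hfhat hfnorm using hfex
    have hbio : ∀ i j : Fin m, fhat j (b i) = if i = j then 1 else 0 := by
      intro i j
      have hmem : b i ∈ Fsp := Submodule.subset_span (Set.mem_range_self i)
      have h1 : fhat j (b i) = bb.coord j ⟨b i, hmem⟩ := by
        have := hfhat j ⟨b i, hmem⟩
        simpa [LinearMap.coe_toContinuousLinearMap'] using this
      have h2 : (⟨b i, hmem⟩ : ↥Fsp) = bb i := by
        apply Subtype.ext
        rw [hbb, Module.Basis.span_apply]
      rw [h1, h2, Module.Basis.coord_apply, Module.Basis.repr_self]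
      exact Finsupp.single_apply
    -- the finite-rank correction
    set F : E →L[ℝ] E × E := ∑ j : Fin m, (fhat j).smulRight (a j) with hFdef
    have hFapp : ∀ z : E, F z = ∑ j : Fin m, fhat j z • a j := by
      intro z
      rw [hFdef]
      simp [ContinuousLinearMap.sum_apply]
    set β : E →L[ℝ] E ⧸ V := ΦB + ΦA.comp F with hβdef
    have hβapp : ∀ z : E, β z = ΦB z + ΦA (F z) := fun z => rfl
    have hβsurj : Function.Surjective β := by
      intro w
      have hw : w ∈ Q'' ⊔ LinearMap.range (ΦB : E →ₗ[ℝ] E ⧸ V) := by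
        rw [hQ''compl.sup_eq_top]; trivial
      obtain ⟨w'', hw'', wB, hwB, rfl⟩ := Submodule.mem_sup.mp hw
      obtain ⟨t₀, rfl⟩ := hwB
      set c : Fin m → ℝ := fun j => ε.repr ⟨w'', hw''⟩ j with hcdef
      set z : E := t₀ + ∑ j : Fin m, (c j - fhat j t₀) • b j with hzdef
      have h1 : ΦB z = ΦB t₀ := by
        rw [hzdef, map_add, map_sum]
        simp [map_smul, hbker]
      have h2 : ∀ j : Fin m, fhat j z = c j := by
        intro j
        rw [hzdef, map_add, map_sum]
        simp only [map_smul, smul_eq_mul, hbio, mul_ite, mul_one, mul_zero]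
        rw [Finset.sum_ite_eq' Finset.univ j (fun i => c i - fhat i t₀)]
        simp only [Finset.mem_univ, if_true]
        ring
      have h3 : ΦA (F z) = w'' := by
        rw [hFapp, map_sum]
        simp only [map_smul, h2, haa]
        have h4 : (∑ j : Fin m, c j • ε j : ↥Q'') = ⟨w'', hw''⟩ := ε.sum_repr ⟨w'', hw''⟩
        have h5 := congrArg (Subtype.val) h4
        rw [AddSubmonoidClass.coe_finset_sum] at h5
        simpa using h5
      refine ⟨z, ?_⟩
      rw [hβapp, h1, h3]
      exact add_comm _ _
    obtain ⟨γ₀, hγ₀⟩ := (β : E →ₗ[ℝ] E ⧸ V).exists_rightInverse_of_surjective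
      (LinearMap.range_eq_top.mpr hβsurj)
    have hγ : ∀ w : E ⧸ V, β (γ₀ w) = w := by
      intro w
      have := LinearMap.ext_iff.mp hγ₀ w
      simpa using this
    set γ : (E ⧸ V) →L[ℝ] E := LinearMap.toContinuousLinearMap γ₀ with hγdef
    have hγcoe : ∀ y, γ y = γ₀ y := fun y => by
      rw [hγdef]; exact congrFun (LinearMap.coe_toContinuousLinearMap' γ₀) y
    set G : (E × E) →L[ℝ] E := -(γ.comp ΦA) with hGdef
    set χ : ((E × E) × E) ≃L[ℝ] E := (shearUp G).trans ((shearDown F).trans ψ) with hχ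
    have hχapp : ∀ p : E × E, χ (p, 0) = ψ (p + F (G p), G p) := by
      intro p
      show ψ (shearDown F (shearUp G (p, 0))) = _
      rw [shearUp_apply, shearDown_apply]
      simp
    have hkey : ∀ p : E × E, χ (p, 0) ∈ V := by
      intro p
      rw [← hq0, hχapp p, hψadd, map_add]
      have hGp : G p = γ₀ (-(ΦA p)) := by
        rw [hGdef]
        show -(γ (ΦA p)) = γ₀ (-(ΦA p))
        rw [hγcoe, ← map_neg]
      have h5 : ΦA (F (G p)) + ΦB (G p) = -(ΦA p) := by
        have h6 : β (G p) = -(ΦA p) := by rw [hGp, hγ]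
        rw [← h6, hβapp]
        exact add_comm _ _
      rw [add_assoc, h5]
      exact add_neg_cancel _
    exact build_decomposition V χ hkey
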